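/- For any permutation σ ∈ S_n, LAS(σ) = 1 + Σ_{k=1}^{n−1} M_k(σ), where M_1(σ) = 1 if σ(1) > σ(2) and 0 otherwise, and for 1 < k < n, M_k(σ) = 1_{σ(k−1)>σ(k)<σ(k+1)} + 1_{σ(k−1)<σ(k)>σ(k+1)}. -/

import Mathlib

open Finset
open scoped Classical

/-- `LAS σ` is the maximal length of an alternating subsequence of `σ`:
indices `i₁ < i₂ < ⋯ < i_k` with `σ(i₁) > σ(i₂) < σ(i₃) > ⋯`. -/
noncomputable def LAS {n : ℕ} (σ : Equiv.Perm (Fin n)) : ℕ :=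
  sSup {k | ∃ l : List (Fin n), l.Chain' (· < ·) ∧
    (∀ t : ℕ, ∀ ht : t + 1 < l.length,
      if Even t then σ (l[t+1]'ht) < σ (l[t]'(Nat.lt_of_succ_lt ht))
      else σ (l[t]'(Nat.lt_of_succ_lt ht)) < σ (l[t+1]'ht)) ∧
    l.length = k}

/-- The value `σ(i)` (1-indexed, with values in `{1,…,n}`), with the convention
`σ(i) = 0` for `i` outside `{1,…,n}`. -/
def ap {n : ℕ} (σ : Equiv.Perm (Fin n)) (i : ℕ) : ℕ :=
  if h : 1 ≤ i ∧ i ≤ n then (σ ⟨i - 1, by omega⟩ : ℕ) + 1 else 0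

/-- The local summand `M_k(σ)`. -/
def Mstat {n : ℕ} (σ : Equiv.Perm (Fin n)) (k : ℕ) : ℕ :=
  if k = 1 then (if ap σ 2 < ap σ 1 then 1 else 0)
  else (if ap σ k < ap σ (k - 1) ∧ ap σ k < ap σ (k + 1) then 1 else 0)
    + (if ap σ (k - 1) < ap σ k ∧ ap σ (k + 1) < ap σ k then 1 else 0)


namespace LasProof

variable {n : ℕ}

/-- 0-based value function. -/
def aval (σ : Equiv.Perm (Fin n)) (i : ℕ) : ℕ := ap σ (i + 1)

lemma aval_eq (σ : Equiv.Perm (Fin n)) (i : ℕ) (hi : i < n) :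
    aval σ i = (σ ⟨i, hi⟩ : ℕ) + 1 := by
  unfold aval ap
  rw [dif_pos ⟨by omega, by omega⟩]
  simp

lemma aval_lt_iff (σ : Equiv.Perm (Fin n)) {i j : ℕ} (hi : i < n) (hj : j < n) :
    aval σ i < aval σ j ↔ σ ⟨i, hi⟩ < σ ⟨j, hj⟩ := by
  rw [aval_eq σ i hi, aval_eq σ j hj, Fin.lt_def]
  omega

lemma aval_total (σ : Equiv.Perm (Fin n)) {i j : ℕ} (hi : i < n) (hj : j < n)
    (hij : i ≠ j) : aval σ i < aval σ j ∨ aval σ j < aval σ i := by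
  rcases lt_or_gt_of_ne (a := σ ⟨i, hi⟩) (b := σ ⟨j, hj⟩) (by
    intro h; exact hij (by simpa [Fin.ext_iff] using σ.injective h)) with h | h
  · exact Or.inl ((aval_lt_iff σ hi hj).2 h)
  · exact Or.inr ((aval_lt_iff σ hj hi).2 h)

/-- Validity of a 0-based index list bounded by `m`. -/
def Valid (σ : Equiv.Perm (Fin n)) (m : ℕ) (l : List ℕ) : Prop :=
  l.Chain' (· < ·) ∧ (∀ i ∈ l, i < m) ∧
  ∀ t : ℕ, ∀ ht : t + 1 < l.length,
    if Even t then aval σ (l[t+1]'ht) < aval σ (l[t]'(Nat.lt_of_succ_lt ht))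
    else aval σ (l[t]'(Nat.lt_of_succ_lt ht)) < aval σ (l[t+1]'ht)

def Fm (σ : Equiv.Perm (Fin n)) (m : ℕ) : ℕ := 1 + ∑ k ∈ Finset.Icc 1 (m-1), Mstat σ k

lemma valid_length_le (σ : Equiv.Perm (Fin n)) (m : ℕ) (l : List ℕ)
    (h : Valid σ m l) : l.length ≤ m := by
  have hp : l.Pairwise (· < ·) := List.isChain_iff_pairwise.mp h.1
  have hnd : l.Nodup := hp.nodup
  rw [← List.toFinset_card_of_nodup hnd]
  have : l.toFinset ⊆ Finset.range m := by
    intro i hi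
    simp only [List.mem_toFinset] at hi
    simpa using h.2.1 i hi
  simpa using Finset.card_le_card this

lemma Valid.concat_left {σ : Equiv.Perm (Fin n)} {m : ℕ} {l : List ℕ} {x : ℕ}
    (h : Valid σ m (l ++ [x])) : Valid σ m l := by
  obtain ⟨h1, h2, h3⟩ := h
  refine ⟨(List.isChain_append.mp h1).1, fun i hi => h2 i (by simp [hi]), fun t ht => ?_⟩
  have ht' : t + 1 < (l ++ [x]).length := by simp; omega
  have := h3 t ht'
  rwa [List.getElem_append_left ht, List.getElem_append_left (Nat.lt_of_succ_lt ht)] at this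

lemma eq_concat_of_mem_max {l : List ℕ} (hc : l.Chain' (· < ·)) {m : ℕ} (hm : m ∈ l)
    (hb : ∀ i ∈ l, i ≤ m) : l = l.dropLast ++ [m] ∧ ∀ i ∈ l.dropLast, i < m := by
  have hne : l ≠ [] := by rintro rfl; simp at hm
  have hp : l.Pairwise (· < ·) := List.isChain_iff_pairwise.mp hc
  have hsplit := List.dropLast_append_getLast hne
  have hp2 : ∀ x ∈ l.dropLast, x < l.getLast hne := by
    have := hsplit ▸ hp
    rw [List.pairwise_append] at this
    intro x hx
    exact this.2.2 x hx (l.getLast hne) (by simp)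
  have hlast : l.getLast hne = m := by
    have h1 : l.getLast hne ≤ m := hb _ (List.getLast_mem hne)
    have hm2 : m ∈ l.dropLast ++ [l.getLast hne] := by rw [hsplit]; exact hm
    rcases List.mem_append.mp hm2 with hm' | hm'
    · exact absurd (hp2 m (by simpa using hm')) (by omega)
    · simp at hm'; omega
  exact ⟨by rw [← hlast]; exact hsplit.symm, fun i hi => hlast ▸ hp2 i hi⟩

lemma valid_succ_cases {σ : Equiv.Perm (Fin n)} {m : ℕ} (l : List ℕ)
    (h : Valid σ (m+1) l) :
    Valid σ m l ∨ ∃ l', l = l' ++ [m] ∧ Valid σ m l' := by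
  by_cases hm : m ∈ l
  · obtain ⟨heq, hlt⟩ := eq_concat_of_mem_max h.1 hm
      (fun i hi => Nat.lt_succ_iff.mp (h.2.1 i hi))
    refine Or.inr ⟨l.dropLast, heq, ?_⟩
    have hv : Valid σ (m+1) l.dropLast := Valid.concat_left (heq ▸ h)
    exact ⟨hv.1, hlt, hv.2.2⟩
  · exact Or.inl ⟨h.1, fun i hi => by
      have := h.2.1 i hi
      have : i ≠ m := by rintro rfl; exact hm hi
      omega, h.2.2⟩

lemma valid_concat {σ : Equiv.Perm (Fin n)} {m : ℕ} {l : List ℕ} {x : ℕ}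
    (h : Valid σ m l) (hxm : x < m) (hlx : ∀ y ∈ l, y < x)
    (halt : ∀ hne : l ≠ [],
      if Even (l.length - 1) then aval σ x < aval σ (l.getLast hne)
      else aval σ (l.getLast hne) < aval σ x) :
    Valid σ m (l ++ [x]) := by
  refine ⟨?_, ?_, ?_⟩
  · rw [List.Chain', List.isChain_append]
    refine ⟨h.1, List.isChain_singleton x, ?_⟩
    intro a ha b hb
    simp only [List.head?_cons, Option.mem_def, Option.some.injEq] at hb
    subst hb
    exact hlx a (List.mem_of_mem_getLast? ha)
  · intro i hi
    rcases List.mem_append.mp hi with hi | hi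
    · exact h.2.1 i hi
    · simp at hi; omega
  · intro t ht
    simp only [List.length_append, List.length_singleton] at ht
    by_cases htl : t + 1 < l.length
    · have := h.2.2 t htl
      rwa [List.getElem_append_left htl, List.getElem_append_left (Nat.lt_of_succ_lt htl)]
    · have hte : t + 1 = l.length := by omega
      have hne : l ≠ [] := by intro he; rw [he] at hte; simp at hte
      have h1 : (l ++ [x])[t+1]'(by simp; omega) = x :=
        List.getElem_concat_length hte _
      have h2 : (l ++ [x])[t]'(by simp; omega) = l.getLast hne := by
        rw [List.getElem_append_left (by omega : t < l.length),
          List.getLast_eq_getElem hne]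
        congr 1
        omega
      have := halt hne
      rw [show l.length - 1 = t by omega] at this
      simp only [h1, h2]
      exact this

lemma Fm_succ (σ : Equiv.Perm (Fin n)) (m : ℕ) (h2 : 1 ≤ m) :
    Fm σ (m+1) = Fm σ m + Mstat σ m := by
  unfold Fm
  obtain ⟨b, rfl⟩ : ∃ b, m = b + 1 := ⟨m - 1, by omega⟩
  rw [show b + 1 + 1 - 1 = b + 1 from rfl, show b + 1 - 1 = b from rfl,
    Finset.sum_Icc_succ_top (by omega) (Mstat σ)]
  ring

lemma Mstat_of_ge (σ : Equiv.Perm (Fin n)) (m : ℕ) (h2 : 2 ≤ m) :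
    Mstat σ m = (if aval σ (m-1) < aval σ (m-2) ∧ aval σ (m-1) < aval σ m then 1 else 0)
      + (if aval σ (m-2) < aval σ (m-1) ∧ aval σ m < aval σ (m-1) then 1 else 0) := by
  unfold Mstat
  rw [if_neg (by omega)]
  have e1 : aval σ (m-1) = ap σ m := by unfold aval; congr 1; omega
  have e2 : aval σ (m-2) = ap σ (m-1) := by unfold aval; congr 1; omega
  have e3 : aval σ m = ap σ (m+1) := rfl
  rw [e1, e2, e3]

end LasProof
namespace LasProof

variable {n : ℕ}

lemma chain_rel {l : List ℕ} (h : l.Chain' (· < ·)) {i : ℕ} (hi : i + 1 < l.length) :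
    l[i] < l[i+1] := by
  have := List.isChain_iff_getElem.mp h i (by omega)
  simpa using this

lemma mem_le_getLast {l : List ℕ} (hc : l.Chain' (· < ·)) (hne : l ≠ []) :
    ∀ y ∈ l, y ≤ l.getLast hne := by
  have hp : l.Pairwise (· < ·) := List.isChain_iff_pairwise.mp hc
  have hsplit := List.dropLast_append_getLast hne
  intro y hy
  have hy2 : y ∈ l.dropLast ++ [l.getLast hne] := by rw [hsplit]; exact hy
  have hp2 : (l.dropLast ++ [l.getLast hne]).Pairwise (· < ·) := by rw [hsplit]; exact hp
  rw [List.pairwise_append] at hp2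
  rcases List.mem_append.mp hy2 with h | h
  · exact le_of_lt (hp2.2.2 y h _ (by simp))
  · simp at h; omega

lemma Valid.mono {σ : Equiv.Perm (Fin n)} {m m' : ℕ} (h : m ≤ m') {l : List ℕ}
    (hv : Valid σ m l) : Valid σ m' l :=
  ⟨hv.1, fun i hi => lt_of_lt_of_le (hv.2.1 i hi) h, hv.2.2⟩

lemma one_le_Fm (σ : Equiv.Perm (Fin n)) (m : ℕ) : 1 ≤ Fm σ m := by
  unfold Fm; omega

lemma key (σ : Equiv.Perm (Fin n)) :
    ∀ m, 2 ≤ m → m ≤ n →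
    ((∃ l : List ℕ, Valid σ m l ∧ l.length = Fm σ m ∧
      ∃ hne : l ≠ [], l.getLast hne = m - 1) ∧
    (Fm σ m % 2 = 0 ↔ aval σ (m-1) < aval σ (m-2)) ∧
    (∀ l, Valid σ m l → l.length ≤ Fm σ m)) := by
  intro m h2
  induction m, h2 using Nat.le_induction with
  | base =>
    intro hn
    have h0 : (0:ℕ) < n := by omega
    have h1 : (1:ℕ) < n := by omega
    have hF : Fm σ 2 = 1 + Mstat σ 1 := by
      unfold Fm; rw [show (2:ℕ) - 1 = 1 from rfl, Finset.Icc_self, Finset.sum_singleton]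
    have hM : Mstat σ 1 = if aval σ 1 < aval σ 0 then 1 else 0 := by
      unfold Mstat; rw [if_pos rfl]; rfl
    rcases aval_total σ h0 h1 (by omega) with hc | hc
    · -- ascending start, Fm = 1
      have hF1 : Fm σ 2 = 1 := by rw [hF, hM, if_neg (lt_asymm hc)]
      refine ⟨⟨[1], ⟨List.isChain_singleton 1, by simp, by intro t ht; simp at ht⟩,
        by simpa using hF1.symm, by simp, by simp⟩, ?_, ?_⟩
      · rw [hF1]
        norm_num
        exact hc.le
      · intro l hl
        rw [hF1]
        by_contra hlen
        have h2l : 1 < l.length := by omega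
        have hcond := hl.2.2 0 h2l
        rw [if_pos (by decide)] at hcond
        have hch : l[0] < l[1] := chain_rel hl.1 h2l
        have hb0 : l[0] < 2 := hl.2.1 _ (List.getElem_mem _)
        have hb1 : l[1] < 2 := hl.2.1 _ (List.getElem_mem _)
        have e0 : l[0]'(by omega) = 0 := by omega
        have e1 : l[1] = 1 := by omega
        rw [e0, e1] at hcond
        exact lt_asymm hc hcond
    · -- descending start, Fm = 2
      have hF2 : Fm σ 2 = 2 := by rw [hF, hM, if_pos hc]
      refine ⟨⟨[0, 1], ⟨List.isChain_pair.mpr (by omega), by simp, ?_⟩,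
        by simpa using hF2.symm, by simp, by simp⟩, ?_, ?_⟩
      · intro t ht
        have ht0 : t = 0 := by simp at ht; omega
        subst ht0
        rw [if_pos (by decide)]
        simpa using hc
      · rw [hF2]
        norm_num
        exact hc
      · intro l hl
        rw [hF2]
        exact valid_length_le σ 2 l hl
  | succ m hm IH =>
    intro hn
    obtain ⟨⟨l, hv, hlen, hne, hlast⟩, hpar, hub⟩ := IH (by omega)
    have hm2 : m - 2 < n := by omega
    have hm1 : m - 1 < n := by omega
    have hmn : m < n := by omega
    have hF1 : 1 ≤ Fm σ m := one_le_Fm σ m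
    have hFs : Fm σ (m+1) = Fm σ m + Mstat σ m := Fm_succ σ m (by omega)
    have hMs := Mstat_of_ge σ m hm
    simp only [Nat.add_sub_cancel, show m + 1 - 2 = m - 1 by omega]
    -- relation between last two elements of l (when l.length ≥ 2)
    have hllen : l.length = Fm σ m := hlen
    have hlast2 : ∀ h2l : 2 ≤ l.length,
        if Even (Fm σ m) then aval σ (m-1) < aval σ (l[l.length-2]'(by omega))
        else aval σ (l[l.length-2]'(by omega)) < aval σ (m-1) := by
      intro h2l
      have hcond := hv.2.2 (l.length - 2) (by omega)
      have hidx : l.length - 2 + 1 = l.length - 1 := by omega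
      have hgl : l[l.length - 1]'(by omega) = m - 1 := by
        rw [← List.getLast_eq_getElem hne, hlast]
      simp only [hidx, hgl] at hcond
      have hevv : Even (l.length - 2) ↔ Even (Fm σ m) := by
        rw [Nat.even_sub h2l, hllen]; simp
      by_cases hev : Even (Fm σ m)
      · rw [if_pos hev]
        rw [if_pos (hevv.mpr hev)] at hcond
        exact hcond
      · rw [if_neg hev]
        rw [if_neg (fun h => hev (hevv.mp h))] at hcond
        exact hcond
    rcases aval_total σ hm1 hm2 (by omega) with hd | hd
    · -- d : descent into position m-1 : aval (m-1) < aval (m-2)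
      have hFe : Fm σ m % 2 = 0 := hpar.mpr hd
      have hF2 : 2 ≤ Fm σ m := by omega
      rcases aval_total σ hmn hm1 (by omega) with hs | hs
      · -- s : aval m < aval (m-1) ; d = s case, Mstat = 0
        have hM0 : Mstat σ m = 0 := by
          rw [hMs, if_neg (fun h => lt_asymm hs h.2), if_neg (fun h => lt_asymm hd h.1)]
        have hFeq : Fm σ (m+1) = Fm σ m := by omega
        constructor
        · -- construction : replace last element of l by m
          have hvd : Valid σ m l.dropLast := by
            apply Valid.concat_left (x := l.getLast hne)
            rw [List.dropLast_append_getLast hne]; exact hv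
          have hv' : Valid σ (m+1) (l.dropLast ++ [m]) := by
            apply valid_concat (hvd.mono (by omega)) (by omega)
            · intro y hy
              exact hv.2.1 y ((List.dropLast_sublist l).subset hy)
            · intro hne'
              have hdl : l.dropLast.length = l.length - 1 := List.length_dropLast
              have h2l : 2 ≤ l.length := by
                by_contra h
                exact hne' (List.eq_nil_of_length_eq_zero
                  (by rw [List.length_dropLast]; omega))
              have hgld : l.dropLast.getLast hne' = l[l.length-2]'(by omega) := by
                rw [List.getLast_eq_getElem hne', List.getElem_dropLast]
                congr 1
                omega
              have hev1 : Even (l.dropLast.length - 1) := by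
                rw [hdl, Nat.even_iff]; omega
              rw [if_pos hev1, hgld]
              have := hlast2 h2l
              rw [if_pos (Nat.even_iff.mpr hFe)] at this
              exact lt_trans hs this
          refine ⟨l.dropLast ++ [m], hv', ?_, by simp, List.getLast_concat⟩
          simp only [List.length_append, List.length_dropLast, List.length_singleton]
          omega
        refine ⟨?_, ?_⟩
        · rw [hFeq]
          exact iff_of_true hFe hs
        · -- upper bound
          intro T hT
          rcases valid_succ_cases T hT with hT' | ⟨T', rfl, hT'⟩
          · rw [hFeq]; exact hub T hT'
          · have hub' := hub T' hT'
            rw [hFeq]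
            simp only [List.length_append, List.length_singleton]
            by_contra hcon
            have hTl : T'.length = Fm σ m := by omega
            have hne'' : T' ≠ [] := by
              intro h; rw [h] at hTl; simp at hTl; omega
            have hT1 : 1 ≤ T'.length := by
              cases T' with
              | nil => exact absurd rfl hne''
              | cons a t => simp
            have hqmem : T'.getLast hne'' ∈ T' := List.getLast_mem hne''
            have hqm : T'.getLast hne'' < m := hT'.2.1 _ hqmem
            have hcond := hT.2.2 (T'.length - 1) (by
              simp only [List.length_append, List.length_singleton]; omega)
            rw [if_neg (by rw [Nat.even_iff]; omega)] at hcond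
            have hg1 : (T' ++ [m])[T'.length - 1]'(by simp) = T'.getLast hne'' := by
              rw [List.getElem_append_left (by omega : T'.length - 1 < T'.length)]
              exact (List.getLast_eq_getElem hne'').symm
            have hg2 : (T' ++ [m])[T'.length - 1 + 1]'(by simp; omega) = m :=
              List.getElem_concat_length (by omega) _
            rw [hg1, hg2] at hcond
            -- hcond : aval σ q < aval σ m
            have hqne : T'.getLast hne'' ≠ m - 1 := by
              intro h
              rw [h] at hcond
              exact lt_asymm hs hcond
            have hqlt : T'.getLast hne'' < m - 1 := by omega
            have hvext : Valid σ m (T' ++ [m-1]) := by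
              apply valid_concat hT' (by omega)
              · intro y hy
                have := mem_le_getLast hT'.1 hne'' y hy
                omega
              · intro _
                rw [if_neg (by rw [hTl, Nat.even_iff]; omega)]
                exact lt_trans hcond hs
            have := hub _ hvext
            simp only [List.length_append, List.length_singleton] at this
            omega
      · -- ¬s : aval (m-1) < aval m ; d ≠ s, Mstat = 1
        have hM1 : Mstat σ m = 1 := by
          rw [hMs, if_pos ⟨hd, hs⟩, if_neg (fun h => lt_asymm hd h.1)]
        have hFeq : Fm σ (m+1) = Fm σ m + 1 := by omega
        constructor
        · have hv' : Valid σ (m+1) (l ++ [m]) := by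
            apply valid_concat (hv.mono (by omega)) (by omega)
            · intro y hy; exact hv.2.1 y hy
            · intro _
              rw [if_neg (by rw [hllen, Nat.even_iff]; omega), hlast]
              exact hs
          refine ⟨l ++ [m], hv', ?_, by simp, List.getLast_concat⟩
          simp only [List.length_append, List.length_singleton]
          omega
        refine ⟨?_, ?_⟩
        · rw [hFeq]
          exact iff_of_false (by omega) (lt_asymm hs)
        · intro T hT
          rcases valid_succ_cases T hT with hT' | ⟨T', rfl, hT'⟩
          · have := hub T hT'; omega
          · have := hub T' hT'
            simp only [List.length_append, List.length_singleton]
            omega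
    · -- ¬d : aval (m-2) < aval (m-1)
      have hFo : Fm σ m % 2 = 1 := by
        rcases Nat.mod_two_eq_zero_or_one (Fm σ m) with h | h
        · exact absurd (hpar.mp h) (lt_asymm hd)
        · exact h
      rcases aval_total σ hmn hm1 (by omega) with hs | hs
      · -- s : aval m < aval (m-1) ; d ≠ s, Mstat = 1
        have hM1 : Mstat σ m = 1 := by
          rw [hMs, if_neg (fun h => lt_asymm hd h.1), if_pos ⟨hd, hs⟩]
        have hFeq : Fm σ (m+1) = Fm σ m + 1 := by omega
        constructor
        · have hv' : Valid σ (m+1) (l ++ [m]) := by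
            apply valid_concat (hv.mono (by omega)) (by omega)
            · intro y hy; exact hv.2.1 y hy
            · intro _
              rw [if_pos (by rw [hllen, Nat.even_iff]; omega), hlast]
              exact hs
          refine ⟨l ++ [m], hv', ?_, by simp, List.getLast_concat⟩
          simp only [List.length_append, List.length_singleton]
          omega
        refine ⟨?_, ?_⟩
        · rw [hFeq]
          exact iff_of_true (by omega) hs
        · intro T hT
          rcases valid_succ_cases T hT with hT' | ⟨T', rfl, hT'⟩
          · have := hub T hT'; omega
          · have := hub T' hT'
            simp only [List.length_append, List.length_singleton]
            omega
      · -- ¬s : aval (m-1) < aval m ; d = s case, Mstat = 0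
        have hM0 : Mstat σ m = 0 := by
          rw [hMs, if_neg (fun h => lt_asymm hd h.1), if_neg (fun h => lt_asymm hs h.2)]
        have hFeq : Fm σ (m+1) = Fm σ m := by omega
        constructor
        · have hvd : Valid σ m l.dropLast := by
            apply Valid.concat_left (x := l.getLast hne)
            rw [List.dropLast_append_getLast hne]; exact hv
          have hv' : Valid σ (m+1) (l.dropLast ++ [m]) := by
            apply valid_concat (hvd.mono (by omega)) (by omega)
            · intro y hy
              exact hv.2.1 y ((List.dropLast_sublist l).subset hy)
            · intro hne'
              have hdl : l.dropLast.length = l.length - 1 := List.length_dropLast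
              have h2l : 2 ≤ l.length := by
                by_contra h
                exact hne' (List.eq_nil_of_length_eq_zero
                  (by rw [List.length_dropLast]; omega))
              have hgld : l.dropLast.getLast hne' = l[l.length-2]'(by omega) := by
                rw [List.getLast_eq_getElem hne', List.getElem_dropLast]
                congr 1
                omega
              have hev1 : ¬ Even (l.dropLast.length - 1) := by
                rw [hdl, Nat.even_iff]; omega
              rw [if_neg hev1, hgld]
              have := hlast2 h2l
              rw [if_neg (by rw [Nat.even_iff]; omega)] at this
              exact lt_trans this hs
          refine ⟨l.dropLast ++ [m], hv', ?_, by simp, List.getLast_concat⟩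
          simp only [List.length_append, List.length_dropLast, List.length_singleton]
          omega
        refine ⟨?_, ?_⟩
        · rw [hFeq]
          exact iff_of_false (by omega) (lt_asymm hs)
        · intro T hT
          rcases valid_succ_cases T hT with hT' | ⟨T', rfl, hT'⟩
          · rw [hFeq]; exact hub T hT'
          · have hub' := hub T' hT'
            rw [hFeq]
            simp only [List.length_append, List.length_singleton]
            by_contra hcon
            have hTl : T'.length = Fm σ m := by omega
            have hne'' : T' ≠ [] := by
              intro h; rw [h] at hTl; simp at hTl; omega
            have hT1 : 1 ≤ T'.length := by
              cases T' with
              | nil => exact absurd rfl hne''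
              | cons a t => simp
            have hqmem : T'.getLast hne'' ∈ T' := List.getLast_mem hne''
            have hqm : T'.getLast hne'' < m := hT'.2.1 _ hqmem
            have hcond := hT.2.2 (T'.length - 1) (by
              simp only [List.length_append, List.length_singleton]; omega)
            rw [if_pos (by rw [Nat.even_iff]; omega)] at hcond
            have hg1 : (T' ++ [m])[T'.length - 1]'(by simp) = T'.getLast hne'' := by
              rw [List.getElem_append_left (by omega : T'.length - 1 < T'.length)]
              exact (List.getLast_eq_getElem hne'').symm
            have hg2 : (T' ++ [m])[T'.length - 1 + 1]'(by simp; omega) = m :=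
              List.getElem_concat_length (by omega) _
            rw [hg1, hg2] at hcond
            -- hcond : aval σ m < aval σ q
            have hqne : T'.getLast hne'' ≠ m - 1 := by
              intro h
              rw [h] at hcond
              exact lt_asymm hs hcond
            have hqlt : T'.getLast hne'' < m - 1 := by omega
            have hvext : Valid σ m (T' ++ [m-1]) := by
              apply valid_concat hT' (by omega)
              · intro y hy
                have := mem_le_getLast hT'.1 hne'' y hy
                omega
              · intro _
                rw [if_pos (by rw [hTl, Nat.even_iff]; omega)]
                exact lt_trans hs hcond
            have := hub _ hvext
            simp only [List.length_append, List.length_singleton] at this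
            omega

end LasProof
namespace LasProof

variable {n : ℕ}

lemma aval_coe (σ : Equiv.Perm (Fin n)) (x : Fin n) : aval σ x.val = (σ x : ℕ) + 1 := by
  rw [aval_eq σ x.val x.isLt]

lemma valid_of_finlist (σ : Equiv.Perm (Fin n)) (l : List (Fin n))
    (h1 : l.Chain' (· < ·))
    (h2 : ∀ t : ℕ, ∀ ht : t + 1 < l.length,
      if Even t then σ (l[t+1]'ht) < σ (l[t]'(Nat.lt_of_succ_lt ht))
      else σ (l[t]'(Nat.lt_of_succ_lt ht)) < σ (l[t+1]'ht)) :
    Valid σ n (l.map Fin.val) := by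
  refine ⟨?_, ?_, ?_⟩
  · rw [List.Chain', List.isChain_map]
    exact h1
  · intro i hi
    obtain ⟨x, hx, rfl⟩ := List.mem_map.mp hi
    exact x.isLt
  · intro t ht
    simp only [List.length_map] at ht
    have hcond := h2 t ht
    simp only [List.getElem_map, aval_coe]
    by_cases hev : Even t
    · rw [if_pos hev]
      rw [if_pos hev] at hcond
      rw [Fin.lt_def] at hcond
      omega
    · rw [if_neg hev]
      rw [if_neg hev] at hcond
      rw [Fin.lt_def] at hcond
      omega

lemma finlist_of_valid (σ : Equiv.Perm (Fin n)) (l : List ℕ) (hv : Valid σ n l) :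
    ∃ L : List (Fin n), L.Chain' (· < ·) ∧
      (∀ t : ℕ, ∀ ht : t + 1 < L.length,
        if Even t then σ (L[t+1]'ht) < σ (L[t]'(Nat.lt_of_succ_lt ht))
        else σ (L[t]'(Nat.lt_of_succ_lt ht)) < σ (L[t+1]'ht)) ∧
      L.length = l.length := by
  have hb : ∀ i ∈ l, i < n := hv.2.1
  refine ⟨l.pmap (fun i h => (⟨i, h⟩ : Fin n)) hb, ?_, ?_, List.length_pmap⟩
  · rw [List.Chain', List.isChain_iff_getElem]
    intro i hi
    simp only [List.get_eq_getElem, List.getElem_pmap]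
    rw [List.length_pmap] at hi
    exact Fin.mk_lt_mk.mpr (chain_rel hv.1 (by omega))
  · intro t ht
    have hL := List.length_pmap (f := fun i h => (⟨i, h⟩ : Fin n)) (l := l) (H := hb)
    rw [hL] at ht
    have hcond := hv.2.2 t ht
    simp only [List.getElem_pmap]
    by_cases hev : Even t
    · rw [if_pos hev]
      rw [if_pos hev] at hcond
      exact (aval_lt_iff σ _ _).mp hcond
    · rw [if_neg hev]
      rw [if_neg hev] at hcond
      exact (aval_lt_iff σ _ _).mp hcond

lemma las_eq_Fm (hn : 2 ≤ n) (σ : Equiv.Perm (Fin n)) : LAS σ = Fm σ n := by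
  obtain ⟨⟨l, hv, hlen, -⟩, -, hub⟩ := key σ n hn le_rfl
  have hmem : Fm σ n ∈ {k | ∃ l : List (Fin n), l.Chain' (· < ·) ∧
      (∀ t : ℕ, ∀ ht : t + 1 < l.length,
        if Even t then σ (l[t+1]'ht) < σ (l[t]'(Nat.lt_of_succ_lt ht))
        else σ (l[t]'(Nat.lt_of_succ_lt ht)) < σ (l[t+1]'ht)) ∧
      l.length = k} := by
    obtain ⟨L, hL1, hL2, hL3⟩ := finlist_of_valid σ l hv
    exact ⟨L, hL1, hL2, by rw [hL3, hlen]⟩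
  have hubS : ∀ k ∈ {k | ∃ l : List (Fin n), l.Chain' (· < ·) ∧
      (∀ t : ℕ, ∀ ht : t + 1 < l.length,
        if Even t then σ (l[t+1]'ht) < σ (l[t]'(Nat.lt_of_succ_lt ht))
        else σ (l[t]'(Nat.lt_of_succ_lt ht)) < σ (l[t+1]'ht)) ∧
      l.length = k}, k ≤ Fm σ n := by
    rintro k ⟨L, hL1, hL2, rfl⟩
    have := hub (L.map Fin.val) (valid_of_finlist σ L hL1 hL2)
    simpa using this
  unfold LAS
  exact le_antisymm (csSup_le ⟨_, hmem⟩ hubS) (le_csSup ⟨_, hubS⟩ hmem)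

end LasProof

/-- `LAS(σ) = 1 + ∑_{k=1}^{n-1} M_k(σ)`. -/
theorem las_eq_one_add_sum {n : ℕ} (hn : 2 ≤ n) (σ : Equiv.Perm (Fin n)) :
    LAS σ = 1 + ∑ k ∈ Finset.Icc 1 (n - 1), Mstat σ k := LasProof.las_eq_Fm hn σ
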